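/- For every k ≥ 0, the prefix of the Thue-Morse word of length 4^k is a palindrome; consequently PPL_t(4^k) = 1 for all k ≥ 0. -/

import Mathlib

/-- The Thue–Morse word: `tm n` is the number of ones (sum of binary digits)
in the binary expansion of `n`, taken mod 2. -/
def tm (n : ℕ) : ℕ := (Nat.digits 2 n).sum % 2

/-- `ps` is a factorization of the finite word `w` into nonempty palindromes. -/
def IsPalDecomp (w : List ℕ) (ps : List (List ℕ)) : Prop :=
  ps.flatten = w ∧ ∀ p ∈ ps, p ≠ [] ∧ p.Palindrome

/-- The palindromic length of a finite word: the least number of nonempty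
palindromes whose concatenation is the word (0 for the empty word). -/
noncomputable def palLen (w : List ℕ) : ℕ :=
  sInf {k | ∃ ps, ps.length = k ∧ IsPalDecomp w ps}

/-- `pplTM n` is the palindromic length of the prefix of length `n`
of the Thue–Morse word. -/
noncomputable def pplTM (n : ℕ) : ℕ := palLen ((List.range n).map tm)

private lemma digitSum_step (q c : ℕ) (hc : c < 2) :
    (Nat.digits 2 (2 * q + c)).sum = c + (Nat.digits 2 q).sum := by
  rcases Nat.eq_zero_or_pos (2 * q + c) with h | h
  · have hq : q = 0 := by omega
    have hc0 : c = 0 := by omega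
    simp [hq, hc0]
  · rw [Nat.digits_def' (by norm_num : 1 < 2) h]
    have h1 : (2 * q + c) % 2 = c := by omega
    have h2 : (2 * q + c) / 2 = q := by omega
    simp [h1, h2]

private lemma digitSum_compl : ∀ m n, n < 2 ^ m →
    (Nat.digits 2 (2 ^ m - 1 - n)).sum + (Nat.digits 2 n).sum = m := by
  intro m
  induction m with
  | zero => intro n hn; interval_cases n; simp
  | succ m ih =>
      intro n hn
      obtain ⟨q, b, hb, rfl⟩ : ∃ q b, b < 2 ∧ n = 2 * q + b :=
        ⟨n / 2, n % 2, Nat.mod_lt _ (by norm_num), by omega⟩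
      have hq : q < 2 ^ m := by
        have := Nat.pow_succ 2 m; omega
      have hM : 2 ^ (m + 1) - 1 - (2 * q + b) = 2 * (2 ^ m - 1 - q) + (1 - b) := by
        have := Nat.pow_succ 2 m
        have h1 : (1:ℕ) ≤ 2 ^ m := Nat.one_le_two_pow
        omega
      rw [hM, digitSum_step (2 ^ m - 1 - q) (1 - b) (by omega), digitSum_step q b hb]
      have := ih q hq
      omega

private lemma tm_compl (m n : ℕ) (hn : n < 4 ^ m) : tm (4 ^ m - 1 - n) = tm n := by
  have h4 : (4:ℕ) ^ m = 2 ^ (2 * m) := by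
    rw [pow_mul]; norm_num
  have := digitSum_compl (2 * m) n (by omega)
  unfold tm
  rw [h4] at *
  omega

/-- Every prefix of the Thue–Morse word of length `4 ^ k` is a palindrome;
consequently `PPL_t(4 ^ k) = 1` for all `k ≥ 0`. -/
theorem pplTM_pow_four (k : ℕ) :
    ((List.range (4 ^ k)).map tm).Palindrome ∧ pplTM (4 ^ k) = 1 := by
  set N := 4 ^ k with hN
  have hNpos : 0 < N := Nat.pow_pos (by norm_num)
  set w := (List.range N).map tm with hw
  have hlen : w.length = N := by simp [hw]
  have hpal : w.Palindrome := by
    apply List.Palindrome.of_reverse_eq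
    apply List.ext_getElem (by simp)
    intro i h1 h2
    have hiN : i < N := by simpa [hw] using h2
    rw [List.getElem_reverse]
    simp only [hw, List.getElem_map, List.getElem_range, List.length_map,
      List.length_range]
    exact tm_compl k i hiN
  refine ⟨hpal, ?_⟩
  have hwne : w ≠ [] := by
    intro h; rw [h] at hlen; simp at hlen; omega
  show palLen w = 1
  unfold palLen
  set S := {k | ∃ ps : List (List ℕ), ps.length = k ∧ IsPalDecomp w ps} with hS
  have h1 : 1 ∈ S := by
    refine ⟨[w], rfl, ?_⟩
    refine ⟨by simp, ?_⟩
    intro p hp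
    simp only [List.mem_singleton] at hp
    subst hp
    exact ⟨hwne, hpal⟩
  have h0 : 0 ∉ S := by
    rintro ⟨ps, hps, hdec⟩
    obtain ⟨hflat, -⟩ := hdec
    rw [List.length_eq_zero_iff] at hps
    subst hps
    simp at hflat
    exact hwne hflat
  have hle : sInf S ≤ 1 := Nat.sInf_le h1
  have hne : sInf S ≠ 0 := by
    intro h
    rcases Nat.sInf_eq_zero.mp h with h | h
    · exact h0 h
    · rw [h] at h1; exact h1
  omega
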